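/- Let G be a finite group and S, T disjoint subsets of G \ {e} with S ∪ T = G \ {e}. Then for every g ∈ G, the number of ordered pairs (g₁,g₂) ∈ S × T with g₁·g₂ = g equals the number of ordered pairs (g₁,g₂) ∈ T × S with g₁·g₂ = g. -/

import Mathlib

/-- Number of ordered pairs `(g₁, g₂) ∈ A × B` with `g₁ * g₂ = g`. -/
def pairCount {G : Type*} [Group G] [DecidableEq G] (A B : Finset G) (g : G) : ℕ :=
  ((A ×ˢ B).filter (fun p => p.1 * p.2 = g)).card

lemma pairCount_right_union {G : Type*} [Group G] [DecidableEq G]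
    (A B C : Finset G) (g : G) (h : Disjoint B C) :
    pairCount A (B ∪ C) g = pairCount A B g + pairCount A C g := by
  unfold pairCount
  rw [Finset.product_union, Finset.filter_union, Finset.card_union_of_disjoint]
  refine Finset.disjoint_filter_filter ?_
  rw [Finset.disjoint_left]
  rintro ⟨a, b⟩ hab hab'
  simp only [Finset.mem_product] at hab hab'
  exact (Finset.disjoint_left.mp h hab.2 hab'.2)

lemma pairCount_left_union {G : Type*} [Group G] [DecidableEq G]
    (A B C : Finset G) (g : G) (h : Disjoint A B) :
    pairCount (A ∪ B) C g = pairCount A C g + pairCount B C g := by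
  unfold pairCount
  rw [Finset.union_product, Finset.filter_union, Finset.card_union_of_disjoint]
  refine Finset.disjoint_filter_filter ?_
  rw [Finset.disjoint_left]
  rintro ⟨a, b⟩ hab hab'
  simp only [Finset.mem_product] at hab hab'
  exact (Finset.disjoint_left.mp h hab.1 hab'.1)

lemma pairCount_right_univ {G : Type*} [Group G] [Fintype G] [DecidableEq G]
    (A : Finset G) (g : G) :
    pairCount A (Finset.univ \ {1}) g = (A \ {g}).card := by
  unfold pairCount
  apply Finset.card_bij (fun p _ => p.1)
  · rintro ⟨a, b⟩ h
    simp only [Finset.mem_filter, Finset.mem_product, Finset.mem_sdiff,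
      Finset.mem_singleton, Finset.mem_univ, true_and] at h
    obtain ⟨⟨ha, hb⟩, hab⟩ := h
    simp only [Finset.mem_sdiff, Finset.mem_singleton]
    refine ⟨ha, fun hag => hb ?_⟩
    subst hag
    exact mul_eq_left.mp hab
  · rintro ⟨a, b⟩ h ⟨a', b'⟩ h' hab
    simp only [Finset.mem_filter, Finset.mem_product] at h h'
    simp only at hab
    subst hab
    have : b = b' := by
      have := h.2.trans h'.2.symm
      exact mul_left_cancel this
    simp [this]
  · intro a ha
    simp only [Finset.mem_sdiff, Finset.mem_singleton] at ha
    refine ⟨(a, a⁻¹ * g), ?_, rfl⟩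
    simp only [Finset.mem_filter, Finset.mem_product, Finset.mem_sdiff,
      Finset.mem_singleton, Finset.mem_univ, true_and]
    exact ⟨⟨ha.1, fun h1 => ha.2 (inv_mul_eq_one.mp h1)⟩, by group⟩

lemma pairCount_left_univ {G : Type*} [Group G] [Fintype G] [DecidableEq G]
    (A : Finset G) (g : G) :
    pairCount (Finset.univ \ {1}) A g = (A \ {g}).card := by
  unfold pairCount
  apply Finset.card_bij (fun p _ => p.2)
  · rintro ⟨a, b⟩ h
    simp only [Finset.mem_filter, Finset.mem_product, Finset.mem_sdiff,
      Finset.mem_singleton] at h ⊢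
    refine ⟨h.1.2, fun hbg => h.1.1.2 ?_⟩
    subst hbg
    exact mul_eq_right.mp h.2
  · rintro ⟨a, b⟩ h ⟨a', b'⟩ h' hab
    simp only [Finset.mem_filter, Finset.mem_product] at h h'
    simp only at hab
    subst hab
    have : a = a' := mul_right_cancel (h.2.trans h'.2.symm)
    simp [this]
  · intro b hb
    simp only [Finset.mem_sdiff, Finset.mem_singleton] at hb
    refine ⟨(g * b⁻¹, b), ?_, rfl⟩
    simp only [Finset.mem_filter, Finset.mem_product, Finset.mem_sdiff,
      Finset.mem_singleton, Finset.mem_univ, true_and]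
    exact ⟨⟨fun h1 => hb.2 (mul_inv_eq_one.mp h1).symm, hb.1⟩, by group⟩

theorem stmt0 {G : Type*} [Group G] [Fintype G] [DecidableEq G]
    (S T : Finset G) (hd : Disjoint S T)
    (hS : (1 : G) ∉ S) (hT : (1 : G) ∉ T)
    (hU : S ∪ T = Finset.univ \ {1}) :
    ∀ g : G, pairCount S T g = pairCount T S g := by
  intro g
  have h1 : pairCount S S g + pairCount S T g = (S \ {g}).card := by
    rw [← pairCount_right_union S S T g hd, hU, pairCount_right_univ]
  have h2 : pairCount S S g + pairCount T S g = (S \ {g}).card := by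
    rw [← pairCount_left_union S T S g hd, hU, pairCount_left_univ]
  omega
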